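/- Let A be a symmetric positive definite real 3×3 matrix, u ∈ ℝ³ a unit vector, γ, k_R, k_β, k_θ > 0, J a symmetric positive definite 3×3 matrix, Γ a symmetric positive definite 3×3 matrix, and Σ a 3×3 matrix with Σᵀ = −Σ. Let R_e, R̃ : ℝ → ℝ^{3×3}, θ, θ̄ : ℝ → ℝ, ω : ℝ → ℝ³, t₀ ∈ ℝ. Write values at t₀ with subscript 0, and set ψ_e := ψ(A·T(R_e(t₀),θ(t₀))), p := ψ(A·T(R̃(t₀),θ̄(t₀))), q := Ra(θ̄(t₀),u)·p, β₀ := Γq. Suppose at t₀: R_e has derivative R_e(t₀)·ω₀^×; θ has derivative −k_θ(γθ₀ + 2uᵀψ_e); R̃ has derivative R̃(t₀)·(ω₀ − β₀)^×; θ̄ has derivative −k_θ(γθ̄₀ + 2uᵀp); and ω has derivative J⁻¹(Σω₀ − 2k_R·Ra(θ₀,u)ψ_e − 2k_β·q). Then the map t ↦ k_R·U(R_e(t),θ(t)) + k_β·U(R̃(t),θ̄(t)) + (1/2)ω(t)ᵀJω(t) has derivative −k_R k_θ (γθ₀ + 2uᵀψ_e)² − k_β k_θ (γθ̄₀ + 2uᵀp)²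 − 2k_β qᵀΓq at t₀. -/

import Mathlib

open Matrix

noncomputable section

abbrev M3 : Type := Matrix (Fin 3) (Fin 3) ℝ
abbrev V3 : Type := Fin 3 → ℝ

/-- skew-symmetric matrix associated to `x`: `skew x *ᵥ y = x ×₃ y`. -/
def skew (x : V3) : M3 :=
  !![0, -x 2, x 1; x 2, 0, -x 0; -x 1, x 0, 0]

/-- the special orthogonal group SO(3) as a subset of 3×3 matrices -/
def SO3 : Set M3 := {R | Rᵀ * R = 1 ∧ R.det = 1}

/-- Rodrigues formula -/
def Ra (θ : ℝ) (u : V3) : M3 :=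
  1 + Real.sin θ • skew u + (1 - Real.cos θ) • (skew u * skew u)

/-- `psi M = vec (P_a M)`, the vector part of the antisymmetric projection -/
def psi (M : M3) : V3 :=
  ![(M 2 1 - M 1 2) / 2, (M 0 2 - M 2 0) / 2, (M 1 0 - M 0 1) / 2]

/-- the angular-warping transformation `T(R,θ) = R · Ra(θ,u)` -/
def Tmap (u : V3) (R : M3) (θ : ℝ) : M3 := R * Ra θ u

/-- the potential function `U(R,θ)` on SO(3) × ℝ -/
def Ufun (A : M3) (u : V3) (γ : ℝ) (R : M3) (θ : ℝ) : ℝ :=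
  (A * (1 - Tmap u R θ)).trace + γ / 2 * θ ^ 2

/-- Euclidean norm on ℝ³ -/
def enorm3 (x : V3) : ℝ := Real.sqrt (x ⬝ᵥ x)

/-- Frobenius norm of a 3×3 matrix -/
def fnorm (M : M3) : ℝ := Real.sqrt ((Mᵀ * M).trace)

/-- `E(M) := (tr(M) I − Mᵀ)/2` -/
def Emap (M : M3) : M3 := (2⁻¹ : ℝ) • (M.trace • (1 : M3) - Mᵀ)

/-- `D_R(R,θ)` from Lemma 2 -/
def DR (A : M3) (u : V3) (R : M3) (θ : ℝ) : M3 :=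
  Ra θ u * Emap (A * Tmap u R θ) * (Ra θ u)ᵀ

/-- `D_θ(R,θ)` from Lemma 2 -/
def Dθ (A : M3) (u : V3) (R : M3) (θ : ℝ) : V3 :=
  (Ra θ u * Emap (A * Tmap u R θ)) *ᵥ u - skew (Ra θ u *ᵥ psi (A * Tmap u R θ)) *ᵥ u

/-- Δ(v,u) from the construction of the synergistic gap -/
def Delta (A : M3) (v u : V3) : ℝ :=
  u ⬝ᵥ ((A.trace • (1 : M3) - A - (2 * (v ⬝ᵥ A *ᵥ v)) • ((1 : M3) - vecMulVec v v)) *ᵥ u)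

/-- `v` is a unit eigenvector of `A` -/
def IsUnitEigen (A : M3) (v : V3) : Prop :=
  v ⬝ᵥ v = 1 ∧ ∃ lam : ℝ, A *ᵥ v = lam • v

/-- Ā := (tr(A) I − A)/2 -/
def Abar (A : M3) : M3 := (2⁻¹ : ℝ) • (A.trace • (1 : M3) - A)

/-- `lam` is an eigenvalue of `M` -/
def IsEigen (M : M3) (lam : ℝ) : Prop := ∃ w : V3, w ≠ 0 ∧ M *ᵥ w = lam • w
attribute [local instance] Matrix.normedAddCommGroup Matrix.normedSpace

set_option linter.unnecessarySeqFocus false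

theorem aux_hu' {u : V3} (hu : u ⬝ᵥ u = 1) : u 0 * u 0 + u 1 * u 1 + u 2 * u 2 = 1 := by
  simpa [dotProduct, Fin.sum_univ_three] using hu

theorem aux_ht (θ : ℝ) : Real.sin θ * Real.sin θ + Real.cos θ * Real.cos θ = 1 := by
  nlinarith [Real.sin_sq_add_cos_sq θ]

theorem hasDerivAt_entry {f : ℝ → M3} {f' : M3} {t : ℝ} (hf : HasDerivAt f f' t) (i j : Fin 3) :
    HasDerivAt (fun t => f t i j) (f' i j) t := by
  have h1 := hasDerivAt_pi.mp hf i
  exact hasDerivAt_pi.mp h1 j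

theorem hasDerivAt_matmul {f g : ℝ → M3} {f' g' : M3} {t : ℝ}
    (hf : HasDerivAt f f' t) (hg : HasDerivAt g g' t) :
    HasDerivAt (fun t => f t * g t) (f' * g t + f t * g') t := by
  refine hasDerivAt_pi.mpr (fun i => ?_)
  refine hasDerivAt_pi.mpr (fun j => ?_)
  have : ∀ s : ℝ, (f s * g s) i j = ∑ k, f s i k * g s k j := fun s => Matrix.mul_apply
  simp only [this]
  have := HasDerivAt.fun_sum (u := Finset.univ)
    (fun k _ => ((hasDerivAt_entry hf i k).fun_mul (hasDerivAt_entry hg k j)))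
  refine this.congr_deriv ?_
  simp [Matrix.add_apply, Matrix.mul_apply, Finset.sum_add_distrib]

theorem hasDerivAt_cmatmul (A : M3) {g : ℝ → M3} {g' : M3} {t : ℝ}
    (hg : HasDerivAt g g' t) : HasDerivAt (fun t => A * g t) (A * g') t := by
  have := hasDerivAt_matmul (hasDerivAt_const t A) hg
  simpa using this

theorem hasDerivAt_trace {f : ℝ → M3} {f' : M3} {t : ℝ} (hf : HasDerivAt f f' t) :
    HasDerivAt (fun t => (f t).trace) f'.trace t := by
  have : ∀ s : ℝ, (f s).trace = ∑ i, f s i i := fun s => rfl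
  simp only [this]
  exact HasDerivAt.fun_sum (fun i _ => hasDerivAt_entry hf i i)

theorem hasDerivAt_Ra (u : V3) (θ₀ : ℝ) :
    HasDerivAt (fun θ => Ra θ u) (Real.cos θ₀ • skew u + Real.sin θ₀ • (skew u * skew u)) θ₀ := by
  refine hasDerivAt_pi.mpr (fun i => ?_)
  refine hasDerivAt_pi.mpr (fun j => ?_)
  have : ∀ θ : ℝ, Ra θ u i j
      = (1 : M3) i j + Real.sin θ * skew u i j + (1 - Real.cos θ) * (skew u * skew u) i j := by
    intro θ; simp [Ra, Matrix.add_apply, Matrix.smul_apply, smul_eq_mul]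
  simp only [this]
  have h1 : HasDerivAt (fun θ : ℝ => (1 : M3) i j + Real.sin θ * skew u i j
      + (1 - Real.cos θ) * (skew u * skew u) i j)
      (0 + Real.cos θ₀ * skew u i j + (0 - (-Real.sin θ₀)) * (skew u * skew u) i j) θ₀ :=
    (((hasDerivAt_const θ₀ _).add ((Real.hasDerivAt_sin θ₀).mul_const _)).add
      (((hasDerivAt_const θ₀ (1:ℝ)).sub (Real.hasDerivAt_cos θ₀)).mul_const _))
  refine h1.congr_deriv ?_
  simp [Matrix.add_apply, Matrix.smul_apply, smul_eq_mul]
  try ring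

theorem Ra_mul_neg {u : V3} (hu : u ⬝ᵥ u = 1) (θ : ℝ) : Ra θ u * Ra (-θ) u = 1 := by
  have hu' := aux_hu' hu
  have ht := aux_ht θ
  ext i j
  fin_cases i <;> fin_cases j
  · (simp [Ra, skew, Matrix.mul_apply, Matrix.mulVec, dotProduct, Fin.sum_univ_three, Matrix.one_apply,
      Matrix.add_apply, Matrix.smul_apply, smul_eq_mul, Real.sin_neg, Real.cos_neg]) <;>
      linear_combination ((-2)*Real.cos θ*u 1*u 1 + (-2)*Real.cos θ*u 2*u 2 + (1)*Real.cos θ*Real.cos θ*u 1*u 1 + (1)*Real.cos θ*Real.cos θ*u 2*u 2 + (1)*u 1*u 1 + (1)*u 2*u 2) * hu' + ((1)*u 1*u 1 + (1)*u 2*u 2) * ht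
  · (simp [Ra, skew, Matrix.mul_apply, Matrix.mulVec, dotProduct, Fin.sum_univ_three, Matrix.one_apply,
      Matrix.add_apply, Matrix.smul_apply, smul_eq_mul, Real.sin_neg, Real.cos_neg]) <;>
      linear_combination ((2)*Real.cos θ*u 0*u 1 + (-1)*Real.cos θ*Real.cos θ*u 0*u 1 + (-1)*u 0*u 1) * hu' + ((-1)*u 0*u 1) * ht
  · (simp [Ra, skew, Matrix.mul_apply, Matrix.mulVec, dotProduct, Fin.sum_univ_three, Matrix.one_apply,
      Matrix.add_apply, Matrix.smul_apply, smul_eq_mul, Real.sin_neg, Real.cos_neg]) <;>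
      linear_combination ((2)*Real.cos θ*u 0*u 2 + (-1)*Real.cos θ*Real.cos θ*u 0*u 2 + (-1)*u 0*u 2) * hu' + ((-1)*u 0*u 2) * ht
  · (simp [Ra, skew, Matrix.mul_apply, Matrix.mulVec, dotProduct, Fin.sum_univ_three, Matrix.one_apply,
      Matrix.add_apply, Matrix.smul_apply, smul_eq_mul, Real.sin_neg, Real.cos_neg]) <;>
      linear_combination ((2)*Real.cos θ*u 0*u 1 + (-1)*Real.cos θ*Real.cos θ*u 0*u 1 + (-1)*u 0*u 1) * hu' + ((-1)*u 0*u 1) * ht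
  · (simp [Ra, skew, Matrix.mul_apply, Matrix.mulVec, dotProduct, Fin.sum_univ_three, Matrix.one_apply,
      Matrix.add_apply, Matrix.smul_apply, smul_eq_mul, Real.sin_neg, Real.cos_neg]) <;>
      linear_combination ((-2)*Real.cos θ*u 0*u 0 + (-2)*Real.cos θ*u 2*u 2 + (1)*Real.cos θ*Real.cos θ*u 0*u 0 + (1)*Real.cos θ*Real.cos θ*u 2*u 2 + (1)*u 0*u 0 + (1)*u 2*u 2) * hu' + ((1)*u 0*u 0 + (1)*u 2*u 2) * ht
  · (simp [Ra, skew, Matrix.mul_apply, Matrix.mulVec, dotProduct, Fin.sum_univ_three, Matrix.one_apply,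
      Matrix.add_apply, Matrix.smul_apply, smul_eq_mul, Real.sin_neg, Real.cos_neg]) <;>
      linear_combination ((2)*Real.cos θ*u 1*u 2 + (-1)*Real.cos θ*Real.cos θ*u 1*u 2 + (-1)*u 1*u 2) * hu' + ((-1)*u 1*u 2) * ht
  · (simp [Ra, skew, Matrix.mul_apply, Matrix.mulVec, dotProduct, Fin.sum_univ_three, Matrix.one_apply,
      Matrix.add_apply, Matrix.smul_apply, smul_eq_mul, Real.sin_neg, Real.cos_neg]) <;>
      linear_combination ((2)*Real.cos θ*u 0*u 2 + (-1)*Real.cos θ*Real.cos θ*u 0*u 2 + (-1)*u 0*u 2) * hu' + ((-1)*u 0*u 2) * ht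
  · (simp [Ra, skew, Matrix.mul_apply, Matrix.mulVec, dotProduct, Fin.sum_univ_three, Matrix.one_apply,
      Matrix.add_apply, Matrix.smul_apply, smul_eq_mul, Real.sin_neg, Real.cos_neg]) <;>
      linear_combination ((2)*Real.cos θ*u 1*u 2 + (-1)*Real.cos θ*Real.cos θ*u 1*u 2 + (-1)*u 1*u 2) * hu' + ((-1)*u 1*u 2) * ht
  · (simp [Ra, skew, Matrix.mul_apply, Matrix.mulVec, dotProduct, Fin.sum_univ_three, Matrix.one_apply,
      Matrix.add_apply, Matrix.smul_apply, smul_eq_mul, Real.sin_neg, Real.cos_neg]) <;>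
      linear_combination ((-2)*Real.cos θ*u 0*u 0 + (-2)*Real.cos θ*u 1*u 1 + (1)*Real.cos θ*Real.cos θ*u 0*u 0 + (1)*Real.cos θ*Real.cos θ*u 1*u 1 + (1)*u 0*u 0 + (1)*u 1*u 1) * hu' + ((1)*u 0*u 0 + (1)*u 1*u 1) * ht

set_option maxHeartbeats 2000000 in
theorem Ra_conj {u : V3} (hu : u ⬝ᵥ u = 1) (θ : ℝ) (w : V3) :
    Ra (-θ) u * skew w * Ra θ u = skew (Ra (-θ) u *ᵥ w) := by
  have hu' := aux_hu' hu
  have ht := aux_ht θ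
  ext i j
  fin_cases i <;> fin_cases j
  · (simp [Ra, skew, Matrix.mul_apply, Matrix.mulVec, dotProduct, Fin.sum_univ_three, Matrix.one_apply,
      Matrix.add_apply, Matrix.smul_apply, smul_eq_mul, Real.sin_neg, Real.cos_neg]) <;>
      linear_combination (0) * hu' + (0) * ht
  · (simp [Ra, skew, Matrix.mul_apply, Matrix.mulVec, dotProduct, Fin.sum_univ_three, Matrix.one_apply,
      Matrix.add_apply, Matrix.smul_apply, smul_eq_mul, Real.sin_neg, Real.cos_neg]) <;>
      linear_combination ((2)*Real.cos θ*u 0*u 2*w 0 + (2)*Real.cos θ*u 1*u 2*w 1 + (2)*Real.cos θ*u 2*u 2*w 2 + (-1)*Real.cos θ*Real.cos θ*u 0*u 2*w 0 + (-1)*Real.cos θ*Real.cos θ*u 1*u 2*w 1 + (-1)*Real.cos θ*Real.cos θ*u 2*u 2*w 2 + (-1)*u 0*u 2*w 0 + (-1)*u 1*u 2*w 1 + (-1)*u 2*u 2*w 2) * hu' + ((-1)*u 0*u 2*w 0 + (-1)*u 1*u 2*w 1 + (-1)*u 2*u 2*w 2) * ht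
  · (simp [Ra, skew, Matrix.mul_apply, Matrix.mulVec, dotProduct, Fin.sum_univ_three, Matrix.one_apply,
      Matrix.add_apply, Matrix.smul_apply, smul_eq_mul, Real.sin_neg, Real.cos_neg]) <;>
      linear_combination ((-2)*Real.cos θ*u 0*u 1*w 0 + (-2)*Real.cos θ*u 1*u 2*w 2 + (-2)*Real.cos θ*u 1*u 1*w 1 + (1)*Real.cos θ*Real.cos θ*u 0*u 1*w 0 + (1)*Real.cos θ*Real.cos θ*u 1*u 2*w 2 + (1)*Real.cos θ*Real.cos θ*u 1*u 1*w 1 + (1)*u 0*u 1*w 0 + (1)*u 1*u 2*w 2 + (1)*u 1*u 1*w 1) * hu' + ((1)*u 0*u 1*w 0 + (1)*u 1*u 2*w 2 + (1)*u 1*u 1*w 1) * ht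
  · (simp [Ra, skew, Matrix.mul_apply, Matrix.mulVec, dotProduct, Fin.sum_univ_three, Matrix.one_apply,
      Matrix.add_apply, Matrix.smul_apply, smul_eq_mul, Real.sin_neg, Real.cos_neg]) <;>
      linear_combination ((-2)*Real.cos θ*u 0*u 2*w 0 + (-2)*Real.cos θ*u 1*u 2*w 1 + (-2)*Real.cos θ*u 2*u 2*w 2 + (1)*Real.cos θ*Real.cos θ*u 0*u 2*w 0 + (1)*Real.cos θ*Real.cos θ*u 1*u 2*w 1 + (1)*Real.cos θ*Real.cos θ*u 2*u 2*w 2 + (1)*u 0*u 2*w 0 + (1)*u 1*u 2*w 1 + (1)*u 2*u 2*w 2) * hu' + ((1)*u 0*u 2*w 0 + (1)*u 1*u 2*w 1 + (1)*u 2*u 2*w 2) * ht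
  · (simp [Ra, skew, Matrix.mul_apply, Matrix.mulVec, dotProduct, Fin.sum_univ_three, Matrix.one_apply,
      Matrix.add_apply, Matrix.smul_apply, smul_eq_mul, Real.sin_neg, Real.cos_neg]) <;>
      linear_combination (0) * hu' + (0) * ht
  · (simp [Ra, skew, Matrix.mul_apply, Matrix.mulVec, dotProduct, Fin.sum_univ_three, Matrix.one_apply,
      Matrix.add_apply, Matrix.smul_apply, smul_eq_mul, Real.sin_neg, Real.cos_neg]) <;>
      linear_combination ((2)*Real.cos θ*u 0*u 1*w 1 + (2)*Real.cos θ*u 0*u 2*w 2 + (2)*Real.cos θ*u 0*u 0*w 0 + (-1)*Real.cos θ*Real.cos θ*u 0*u 1*w 1 + (-1)*Real.cos θ*Real.cos θ*u 0*u 2*w 2 + (-1)*Real.cos θ*Real.cos θ*u 0*u 0*w 0 + (-1)*u 0*u 1*w 1 + (-1)*u 0*u 2*w 2 + (-1)*u 0*u 0*w 0) * hu' + ((-1)*u 0*u 1*w 1 + (-1)*u 0*u 2*w 2 + (-1)*u 0*u 0*w 0) * ht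
  · (simp [Ra, skew, Matrix.mul_apply, Matrix.mulVec, dotProduct, Fin.sum_univ_three, Matrix.one_apply,
      Matrix.add_apply, Matrix.smul_apply, smul_eq_mul, Real.sin_neg, Real.cos_neg]) <;>
      linear_combination ((2)*Real.cos θ*u 0*u 1*w 0 + (2)*Real.cos θ*u 1*u 2*w 2 + (2)*Real.cos θ*u 1*u 1*w 1 + (-1)*Real.cos θ*Real.cos θ*u 0*u 1*w 0 + (-1)*Real.cos θ*Real.cos θ*u 1*u 2*w 2 + (-1)*Real.cos θ*Real.cos θ*u 1*u 1*w 1 + (-1)*u 0*u 1*w 0 + (-1)*u 1*u 2*w 2 + (-1)*u 1*u 1*w 1) * hu' + ((-1)*u 0*u 1*w 0 + (-1)*u 1*u 2*w 2 + (-1)*u 1*u 1*w 1) * ht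
  · (simp [Ra, skew, Matrix.mul_apply, Matrix.mulVec, dotProduct, Fin.sum_univ_three, Matrix.one_apply,
      Matrix.add_apply, Matrix.smul_apply, smul_eq_mul, Real.sin_neg, Real.cos_neg]) <;>
      linear_combination ((-2)*Real.cos θ*u 0*u 1*w 1 + (-2)*Real.cos θ*u 0*u 2*w 2 + (-2)*Real.cos θ*u 0*u 0*w 0 + (1)*Real.cos θ*Real.cos θ*u 0*u 1*w 1 + (1)*Real.cos θ*Real.cos θ*u 0*u 2*w 2 + (1)*Real.cos θ*Real.cos θ*u 0*u 0*w 0 + (1)*u 0*u 1*w 1 + (1)*u 0*u 2*w 2 + (1)*u 0*u 0*w 0) * hu' + ((1)*u 0*u 1*w 1 + (1)*u 0*u 2*w 2 + (1)*u 0*u 0*w 0) * ht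
  · (simp [Ra, skew, Matrix.mul_apply, Matrix.mulVec, dotProduct, Fin.sum_univ_three, Matrix.one_apply,
      Matrix.add_apply, Matrix.smul_apply, smul_eq_mul, Real.sin_neg, Real.cos_neg]) <;>
      linear_combination (0) * hu' + (0) * ht

theorem Ra_mul_skew {u : V3} (hu : u ⬝ᵥ u = 1) (θ : ℝ) :
    Ra θ u * skew u = Real.cos θ • skew u + Real.sin θ • (skew u * skew u) := by
  have hu' := aux_hu' hu
  have ht := aux_ht θ
  ext i j
  fin_cases i <;> fin_cases j
  · (simp [Ra, skew, Matrix.mul_apply, Matrix.mulVec, dotProduct, Fin.sum_univ_three, Matrix.one_apply,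
      Matrix.add_apply, Matrix.smul_apply, smul_eq_mul, Real.sin_neg, Real.cos_neg]) <;>
      linear_combination (0) * hu' + (0) * ht
  · (simp [Ra, skew, Matrix.mul_apply, Matrix.mulVec, dotProduct, Fin.sum_univ_three, Matrix.one_apply,
      Matrix.add_apply, Matrix.smul_apply, smul_eq_mul, Real.sin_neg, Real.cos_neg]) <;>
      linear_combination ((-1)*Real.cos θ*u 2 + (1)*u 2) * hu' + (0) * ht
  · (simp [Ra, skew, Matrix.mul_apply, Matrix.mulVec, dotProduct, Fin.sum_univ_three, Matrix.one_apply,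
      Matrix.add_apply, Matrix.smul_apply, smul_eq_mul, Real.sin_neg, Real.cos_neg]) <;>
      linear_combination ((1)*Real.cos θ*u 1 + (-1)*u 1) * hu' + (0) * ht
  · (simp [Ra, skew, Matrix.mul_apply, Matrix.mulVec, dotProduct, Fin.sum_univ_three, Matrix.one_apply,
      Matrix.add_apply, Matrix.smul_apply, smul_eq_mul, Real.sin_neg, Real.cos_neg]) <;>
      linear_combination ((1)*Real.cos θ*u 2 + (-1)*u 2) * hu' + (0) * ht
  · (simp [Ra, skew, Matrix.mul_apply, Matrix.mulVec, dotProduct, Fin.sum_univ_three, Matrix.one_apply,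
      Matrix.add_apply, Matrix.smul_apply, smul_eq_mul, Real.sin_neg, Real.cos_neg]) <;>
      linear_combination (0) * hu' + (0) * ht
  · (simp [Ra, skew, Matrix.mul_apply, Matrix.mulVec, dotProduct, Fin.sum_univ_three, Matrix.one_apply,
      Matrix.add_apply, Matrix.smul_apply, smul_eq_mul, Real.sin_neg, Real.cos_neg]) <;>
      linear_combination ((-1)*Real.cos θ*u 0 + (1)*u 0) * hu' + (0) * ht
  · (simp [Ra, skew, Matrix.mul_apply, Matrix.mulVec, dotProduct, Fin.sum_univ_three, Matrix.one_apply,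
      Matrix.add_apply, Matrix.smul_apply, smul_eq_mul, Real.sin_neg, Real.cos_neg]) <;>
      linear_combination ((-1)*Real.cos θ*u 1 + (1)*u 1) * hu' + (0) * ht
  · (simp [Ra, skew, Matrix.mul_apply, Matrix.mulVec, dotProduct, Fin.sum_univ_three, Matrix.one_apply,
      Matrix.add_apply, Matrix.smul_apply, smul_eq_mul, Real.sin_neg, Real.cos_neg]) <;>
      linear_combination ((1)*Real.cos θ*u 0 + (-1)*u 0) * hu' + (0) * ht
  · (simp [Ra, skew, Matrix.mul_apply, Matrix.mulVec, dotProduct, Fin.sum_univ_three, Matrix.one_apply,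
      Matrix.add_apply, Matrix.smul_apply, smul_eq_mul, Real.sin_neg, Real.cos_neg]) <;>
      linear_combination (0) * hu' + (0) * ht

theorem trace_mul_skew (M : M3) (x : V3) : (M * skew x).trace = -2 * (x ⬝ᵥ psi M) := by
  simp [Matrix.trace, Matrix.diag, psi, skew, Matrix.mul_apply, dotProduct, Fin.sum_univ_three]
  ring

theorem dot_transfer {u : V3} (θ : ℝ) (w y : V3) :
    (Ra (-θ) u *ᵥ w) ⬝ᵥ y = w ⬝ᵥ (Ra θ u *ᵥ y) := by
  simp [Ra, skew, Matrix.mulVec, dotProduct, Fin.sum_univ_three, Matrix.mul_apply,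
    Matrix.one_apply, Matrix.add_apply, Matrix.smul_apply, smul_eq_mul, Real.sin_neg, Real.cos_neg]
  ring

theorem key_trace {u : V3} (hu : u ⬝ᵥ u = 1) (A R : M3) (w : V3) (θ : ℝ) :
    (A * (R * skew w * Ra θ u)).trace
      = -2 * (w ⬝ᵥ (Ra θ u *ᵥ psi (A * (R * Ra θ u)))) := by
  have h1 : skew w * Ra θ u = Ra θ u * skew (Ra (-θ) u *ᵥ w) := by
    calc skew w * Ra θ u = (Ra θ u * Ra (-θ) u) * (skew w * Ra θ u) := by
          rw [Ra_mul_neg hu, one_mul]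
      _ = Ra θ u * (Ra (-θ) u * skew w * Ra θ u) := by noncomm_ring
      _ = Ra θ u * skew (Ra (-θ) u *ᵥ w) := by rw [Ra_conj hu]
  have h2 : A * (R * skew w * Ra θ u) = (A * (R * Ra θ u)) * skew (Ra (-θ) u *ᵥ w) := by
    rw [mul_assoc R, h1]; noncomm_ring
  rw [h2, trace_mul_skew, dot_transfer]

theorem dot_symm (M : M3) (hM : ∀ i j, M i j = M j i) (x y : V3) :
    x ⬝ᵥ (M *ᵥ y) = y ⬝ᵥ (M *ᵥ x) := by
  simp [dotProduct, Matrix.mulVec, Fin.sum_univ_three]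
  linear_combination (x 0 * y 1 - x 1 * y 0) * hM 0 1 + (x 0 * y 2 - x 2 * y 0) * hM 0 2
    + (x 1 * y 2 - x 2 * y 1) * hM 1 2

theorem dot_skewM (Sm : M3) (hSm : Smᵀ = -Sm) (x : V3) : x ⬝ᵥ (Sm *ᵥ x) = 0 := by
  have h : ∀ i j, Sm j i = -(Sm i j) := fun i j => by
    have := congrFun (congrFun hSm i) j
    simpa [Matrix.transpose_apply, Matrix.neg_apply] using this
  simp [dotProduct, Matrix.mulVec, Fin.sum_univ_three]
  linear_combination (x 0 * x 0 / 2) * h 0 0 + (x 1 * x 1 / 2) * h 1 1 + (x 2 * x 2 / 2) * h 2 2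
    + (x 0 * x 1) * h 0 1 + (x 0 * x 2) * h 0 2 + (x 1 * x 2) * h 1 2


theorem lyapunov_decrease_velocity_free
    (A : M3) (hA : A.PosDef) (u : V3) (hu : u ⬝ᵥ u = 1)
    (γ kR kβ kθ : ℝ) (hγ : 0 < γ) (hkR : 0 < kR) (hkβ : 0 < kβ) (hkθ : 0 < kθ)
    (J : M3) (hJ : J.PosDef) (Γm : M3) (hΓ : Γm.PosDef)
    (Sm : M3) (hSm : Smᵀ = -Sm)
    (Re Rt : ℝ → M3) (θ θb : ℝ → ℝ) (ω : ℝ → V3) (t₀ : ℝ)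
    (psie p q β0 : V3)
    (hpsie : psie = psi (A * Tmap u (Re t₀) (θ t₀)))
    (hp : p = psi (A * Tmap u (Rt t₀) (θb t₀)))
    (hq : q = Ra (θb t₀) u *ᵥ p)
    (hβ0 : β0 = Γm *ᵥ q)
    (hRe : HasDerivAt Re (Re t₀ * skew (ω t₀)) t₀)
    (hθ : HasDerivAt θ (-(kθ * (γ * θ t₀ + 2 * (u ⬝ᵥ psie)))) t₀)
    (hRt : HasDerivAt Rt (Rt t₀ * skew (ω t₀ - β0)) t₀)
    (hθb : HasDerivAt θb (-(kθ * (γ * θb t₀ + 2 * (u ⬝ᵥ p)))) t₀)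
    (hω : HasDerivAt ω
      (J⁻¹ *ᵥ (Sm *ᵥ ω t₀ - (2 * kR) • (Ra (θ t₀) u *ᵥ psie) - (2 * kβ) • q)) t₀) :
    HasDerivAt
      (fun t => kR * Ufun A u γ (Re t) (θ t) + kβ * Ufun A u γ (Rt t) (θb t) +
        1 / 2 * (ω t ⬝ᵥ J *ᵥ ω t))
      (-(kR * kθ * (γ * θ t₀ + 2 * (u ⬝ᵥ psie)) ^ 2)
        - kβ * kθ * (γ * θb t₀ + 2 * (u ⬝ᵥ p)) ^ 2
        - 2 * kβ * (q ⬝ᵥ Γm *ᵥ q)) t₀ := by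
  classical
  have hpsie' : psie = psi (A * (Re t₀ * Ra (θ t₀) u)) := by rw [hpsie]; rfl
  have hp' : p = psi (A * (Rt t₀ * Ra (θb t₀) u)) := by rw [hp]; rfl
  -- abbreviations
  set θ1' : ℝ := -(kθ * (γ * θ t₀ + 2 * (u ⬝ᵥ psie))) with hθ1'def
  set θ2' : ℝ := -(kθ * (γ * θb t₀ + 2 * (u ⬝ᵥ p))) with hθ2'def
  set v : V3 := Sm *ᵥ ω t₀ - (2 * kR) • (Ra (θ t₀) u *ᵥ psie) - (2 * kβ) • q with hvdef
  set ω' : V3 := J⁻¹ *ᵥ v with hω'def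
  -- derivative of t ↦ Ra (θ t) u
  have hθ1 : HasDerivAt (fun t => Ra (θ t) u)
      (θ1' • (Real.cos (θ t₀) • skew u + Real.sin (θ t₀) • (skew u * skew u))) t₀ := by
    have := HasDerivAt.scomp (𝕜 := ℝ) t₀ (hasDerivAt_Ra u (θ t₀)) hθ
    simp [Function.comp_def] at this ⊢; exact this
  have hθ2 : HasDerivAt (fun t => Ra (θb t) u)
      (θ2' • (Real.cos (θb t₀) • skew u + Real.sin (θb t₀) • (skew u * skew u))) t₀ := by
    have := HasDerivAt.scomp (𝕜 := ℝ) t₀ (hasDerivAt_Ra u (θb t₀)) hθb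
    simp [Function.comp_def] at this ⊢; exact this
  -- derivative of the two trace terms
  have htr1 : HasDerivAt (fun t => (A * (Re t * Ra (θ t) u)).trace)
      ((A * (Re t₀ * skew (ω t₀) * Ra (θ t₀) u +
        Re t₀ * (θ1' • (Real.cos (θ t₀) • skew u + Real.sin (θ t₀) • (skew u * skew u))))).trace) t₀ :=
    hasDerivAt_trace (hasDerivAt_cmatmul A (hasDerivAt_matmul hRe hθ1))
  have htr2 : HasDerivAt (fun t => (A * (Rt t * Ra (θb t) u)).trace)
      ((A * (Rt t₀ * skew (ω t₀ - β0) * Ra (θb t₀) u +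
        Rt t₀ * (θ2' • (Real.cos (θb t₀) • skew u + Real.sin (θb t₀) • (skew u * skew u))))).trace) t₀ :=
    hasDerivAt_trace (hasDerivAt_cmatmul A (hasDerivAt_matmul hRt hθ2))
  -- derivative of the two potential functions
  have hU1 : HasDerivAt (fun t => Ufun A u γ (Re t) (θ t))
      (0 - (A * (Re t₀ * skew (ω t₀) * Ra (θ t₀) u +
        Re t₀ * (θ1' • (Real.cos (θ t₀) • skew u + Real.sin (θ t₀) • (skew u * skew u))))).trace
       + γ / 2 * (2 * θ t₀ ^ 1 * θ1')) t₀ := by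
    have hfun : (fun t => Ufun A u γ (Re t) (θ t)) =
        (fun t => (A.trace - (A * (Re t * Ra (θ t) u)).trace) + γ / 2 * θ t ^ 2) := by
      funext t
      simp [Ufun, Tmap, Matrix.mul_sub, Matrix.mul_one, Matrix.trace_sub]
    rw [hfun]
    have hsq : HasDerivAt (fun t => γ / 2 * θ t ^ 2) (γ / 2 * (2 * θ t₀ ^ 1 * θ1')) t₀ := by
      have := (hθ.fun_pow 2).const_mul (γ / 2)
      refine this.congr_deriv ?_
      all_goals (push_cast; ring)
    exact ((hasDerivAt_const t₀ A.trace).sub htr1).add hsq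
  have hU2 : HasDerivAt (fun t => Ufun A u γ (Rt t) (θb t))
      (0 - (A * (Rt t₀ * skew (ω t₀ - β0) * Ra (θb t₀) u +
        Rt t₀ * (θ2' • (Real.cos (θb t₀) • skew u + Real.sin (θb t₀) • (skew u * skew u))))).trace
       + γ / 2 * (2 * θb t₀ ^ 1 * θ2')) t₀ := by
    have hfun : (fun t => Ufun A u γ (Rt t) (θb t)) =
        (fun t => (A.trace - (A * (Rt t * Ra (θb t) u)).trace) + γ / 2 * θb t ^ 2) := by
      funext t
      simp [Ufun, Tmap, Matrix.mul_sub, Matrix.mul_one, Matrix.trace_sub]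
    rw [hfun]
    have hsq : HasDerivAt (fun t => γ / 2 * θb t ^ 2) (γ / 2 * (2 * θb t₀ ^ 1 * θ2')) t₀ := by
      have := (hθb.fun_pow 2).const_mul (γ / 2)
      refine this.congr_deriv ?_
      all_goals (push_cast; ring)
    exact ((hasDerivAt_const t₀ A.trace).sub htr2).add hsq
  -- derivative of the kinetic term
  have hωi : ∀ i, HasDerivAt (fun t => ω t i) (ω' i) t₀ := fun i => hasDerivAt_pi.mp hω i
  have hdot : HasDerivAt (fun t => ω t ⬝ᵥ J *ᵥ ω t)
      (ω' ⬝ᵥ J *ᵥ ω t₀ + ω t₀ ⬝ᵥ J *ᵥ ω') t₀ := by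
    have h1 : (fun t => ω t ⬝ᵥ J *ᵥ ω t) = fun t => ∑ i, ω t i * ∑ j, J i j * ω t j := by
      funext t; simp [dotProduct, Matrix.mulVec]
    rw [h1]
    have h2 := HasDerivAt.fun_sum (u := Finset.univ) (fun i _ =>
      ((hωi i).fun_mul (HasDerivAt.fun_sum (u := Finset.univ) (fun j _ => ((hωi j).const_mul (J i j))))))
    refine h2.congr_deriv ?_
    simp [dotProduct, Matrix.mulVec, Finset.sum_add_distrib]
  -- total derivative
  have HV := ((hU1.const_mul kR).add (hU2.const_mul kβ)).add (hdot.const_mul (1/2 : ℝ))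
  refine HV.congr_deriv ?_
  -- now the algebraic identification of the derivative value
  have hA1 : (A * (Re t₀ * skew (ω t₀) * Ra (θ t₀) u +
      Re t₀ * (θ1' • (Real.cos (θ t₀) • skew u + Real.sin (θ t₀) • (skew u * skew u))))).trace
      = -2 * (ω t₀ ⬝ᵥ (Ra (θ t₀) u *ᵥ psie)) + θ1' * (-2 * (u ⬝ᵥ psie)) := by
    rw [Matrix.mul_add, Matrix.trace_add]
    have e1 : (A * (Re t₀ * skew (ω t₀) * Ra (θ t₀) u)).trace
        = -2 * (ω t₀ ⬝ᵥ (Ra (θ t₀) u *ᵥ psie)) := by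
      rw [hpsie']; exact key_trace hu A (Re t₀) (ω t₀) (θ t₀)
    have e2 : (A * (Re t₀ * (θ1' • (Real.cos (θ t₀) • skew u
        + Real.sin (θ t₀) • (skew u * skew u))))).trace = θ1' * (-2 * (u ⬝ᵥ psie)) := by
      rw [← Ra_mul_skew hu (θ t₀), mul_smul_comm, mul_smul_comm, Matrix.trace_smul, smul_eq_mul,
        show A * (Re t₀ * (Ra (θ t₀) u * skew u)) = (A * (Re t₀ * Ra (θ t₀) u)) * skew u by
          noncomm_ring,
        trace_mul_skew, hpsie']
    rw [e1, e2]
  have hA2 : (A * (Rt t₀ * skew (ω t₀ - β0) * Ra (θb t₀) u +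
      Rt t₀ * (θ2' • (Real.cos (θb t₀) • skew u + Real.sin (θb t₀) • (skew u * skew u))))).trace
      = -2 * ((ω t₀ - β0) ⬝ᵥ q) + θ2' * (-2 * (u ⬝ᵥ p)) := by
    rw [Matrix.mul_add, Matrix.trace_add]
    have e1 : (A * (Rt t₀ * skew (ω t₀ - β0) * Ra (θb t₀) u)).trace
        = -2 * ((ω t₀ - β0) ⬝ᵥ q) := by
      rw [hq, hp']; exact key_trace hu A (Rt t₀) (ω t₀ - β0) (θb t₀)
    have e2 : (A * (Rt t₀ * (θ2' • (Real.cos (θb t₀) • skew u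
        + Real.sin (θb t₀) • (skew u * skew u))))).trace = θ2' * (-2 * (u ⬝ᵥ p)) := by
      rw [← Ra_mul_skew hu (θb t₀), mul_smul_comm, mul_smul_comm, Matrix.trace_smul, smul_eq_mul,
        show A * (Rt t₀ * (Ra (θb t₀) u * skew u)) = (A * (Rt t₀ * Ra (θb t₀) u)) * skew u by
          noncomm_ring,
        trace_mul_skew, hp']
    rw [e1, e2]
  have hJv : J *ᵥ ω' = v := by
    rw [hω'def, Matrix.mulVec_mulVec, Matrix.mul_nonsing_inv J
      (isUnit_iff_ne_zero.mpr (ne_of_gt hJ.det_pos)), Matrix.one_mulVec]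
  have hJs : ∀ i j, J i j = J j i := fun i j => by
    have := congrFun (congrFun hJ.1 j) i
    simpa [Matrix.conjTranspose_apply] using this
  have hsym : ω' ⬝ᵥ J *ᵥ ω t₀ = ω t₀ ⬝ᵥ J *ᵥ ω' := dot_symm J hJs ω' (ω t₀)
  have hωv : ω t₀ ⬝ᵥ J *ᵥ ω' = -(2 * kR) * (ω t₀ ⬝ᵥ (Ra (θ t₀) u *ᵥ psie))
      - 2 * kβ * (ω t₀ ⬝ᵥ q) := by
    rw [hJv, hvdef]
    simp [dotProduct_sub, dotProduct_smul, smul_eq_mul, dot_skewM Sm hSm (ω t₀)]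
    try ring
  have hbq : (ω t₀ - β0) ⬝ᵥ q = ω t₀ ⬝ᵥ q - q ⬝ᵥ (Γm *ᵥ q) := by
    rw [sub_dotProduct, hβ0, dotProduct_comm (Γm *ᵥ q) q]
  rw [hA1, hA2, hsym, hωv, hbq]
  rw [hθ1'def, hθ2'def]
  push_cast
  ring
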